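/- Let E be a real normed vector space and L ≥ 1 a natural number. For each ℓ ∈ {1, …, L}, let g_ℓ : E → E be Lipschitz with constant L_ℓ ≥ 0, let a_ℓ, â_ℓ ∈ E, and let ε_ℓ > 0. Define sequences h_0 = ĥ_0 ∈ E and recursively h_ℓ = g_ℓ(h_{ℓ−1}) + a_ℓ, ĥ_ℓ = g_ℓ(ĥ_{ℓ−1}) + â_ℓ. Then ‖h_L − ĥ_L‖² ≤ Σ_{ℓ=1}^{L} [ Π_{m=ℓ+1}^{L} (1+ε_m)·L_m² ] · (1 + ε_ℓ^{−1}) · ‖a_ℓ − â_ℓ‖². -/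
import Mathlib


open Finset

lemma young_norm_sq {E : Type*} [NormedAddCommGroup E] (u v : E) {ε : ℝ} (hε : 0 < ε) :
    ‖u + v‖ ^ 2 ≤ (1 + ε) * ‖u‖ ^ 2 + (1 + ε⁻¹) * ‖v‖ ^ 2 := by
  have h1 : ‖u + v‖ ≤ ‖u‖ + ‖v‖ := norm_add_le u v
  have h2 : ‖u + v‖ ^ 2 ≤ (‖u‖ + ‖v‖) ^ 2 :=
    pow_le_pow_left₀ (norm_nonneg _) h1 2
  have hinv : ε * ε⁻¹ = 1 := mul_inv_cancel₀ hε.ne'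
  nlinarith [sq_nonneg (ε * ‖u‖ - ‖v‖), norm_nonneg u, norm_nonneg v, hε,
    mul_pos hε (inv_pos.mpr hε), sq_nonneg ‖v‖]

/-- Error propagation through `L` residual layers: with `h_ℓ = g_ℓ(h_{ℓ−1}) + a_ℓ`,
`ĥ_ℓ = g_ℓ(ĥ_{ℓ−1}) + â_ℓ`, `h_0 = ĥ_0`, and each `g_ℓ` Lipschitz with constant `Lc ℓ`,
`‖h_L − ĥ_L‖² ≤ Σ_{ℓ=1}^{L} [Π_{m=ℓ+1}^{L} (1+ε_m)·Lc_m²]·(1+ε_ℓ⁻¹)·‖a_ℓ − â_ℓ‖²`. -/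
theorem error_propagation {E : Type*} [NormedAddCommGroup E] [NormedSpace ℝ E]
    (L : ℕ) (hL : 1 ≤ L)
    (g : ℕ → E → E) (Lc : ℕ → ℝ) (hLc : ∀ ℓ, 0 ≤ Lc ℓ)
    (hg : ∀ ℓ x y, ‖g ℓ x - g ℓ y‖ ≤ Lc ℓ * ‖x - y‖)
    (a ahat : ℕ → E) (ε : ℕ → ℝ) (hε : ∀ ℓ, 0 < ε ℓ)
    (h hhat : ℕ → E) (h0 : h 0 = hhat 0)
    (hrec : ∀ ℓ, h (ℓ + 1) = g (ℓ + 1) (h ℓ) + a (ℓ + 1))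
    (hhatrec : ∀ ℓ, hhat (ℓ + 1) = g (ℓ + 1) (hhat ℓ) + ahat (ℓ + 1)) :
    ‖h L - hhat L‖ ^ 2 ≤
      ∑ ℓ ∈ Finset.Icc 1 L,
        (∏ m ∈ Finset.Icc (ℓ + 1) L, (1 + ε m) * (Lc m) ^ 2) *
          (1 + (ε ℓ)⁻¹) * ‖a ℓ - ahat ℓ‖ ^ 2 := by
  clear hL
  induction L with
  | zero => simp [h0]
  | succ n ih =>
    have hd : h (n + 1) - hhat (n + 1) =
        (g (n + 1) (h n) - g (n + 1) (hhat n)) + (a (n + 1) - ahat (n + 1)) := by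
      rw [hrec, hhatrec]; abel
    have key : ‖h (n + 1) - hhat (n + 1)‖ ^ 2 ≤
        (1 + ε (n + 1)) * ‖g (n + 1) (h n) - g (n + 1) (hhat n)‖ ^ 2 +
        (1 + (ε (n + 1))⁻¹) * ‖a (n + 1) - ahat (n + 1)‖ ^ 2 := by
      rw [hd]; exact young_norm_sq _ _ (hε (n + 1))
    have hlip : ‖g (n + 1) (h n) - g (n + 1) (hhat n)‖ ^ 2 ≤
        (Lc (n + 1)) ^ 2 * ‖h n - hhat n‖ ^ 2 := by
      have := pow_le_pow_left₀ (norm_nonneg _) (hg (n + 1) (h n) (hhat n)) 2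
      calc ‖g (n + 1) (h n) - g (n + 1) (hhat n)‖ ^ 2
          ≤ (Lc (n + 1) * ‖h n - hhat n‖) ^ 2 := this
        _ = (Lc (n + 1)) ^ 2 * ‖h n - hhat n‖ ^ 2 := by ring
    -- rewrite RHS sum
    have hsum : ∑ ℓ ∈ Finset.Icc 1 (n + 1),
        (∏ m ∈ Finset.Icc (ℓ + 1) (n + 1), (1 + ε m) * (Lc m) ^ 2) *
          (1 + (ε ℓ)⁻¹) * ‖a ℓ - ahat ℓ‖ ^ 2 =
        ((1 + ε (n + 1)) * (Lc (n + 1)) ^ 2) *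
          (∑ ℓ ∈ Finset.Icc 1 n,
            (∏ m ∈ Finset.Icc (ℓ + 1) n, (1 + ε m) * (Lc m) ^ 2) *
              (1 + (ε ℓ)⁻¹) * ‖a ℓ - ahat ℓ‖ ^ 2) +
        (1 + (ε (n + 1))⁻¹) * ‖a (n + 1) - ahat (n + 1)‖ ^ 2 := by
      rw [Finset.sum_Icc_succ_top (by omega : 1 ≤ n + 1)]
      rw [Finset.mul_sum]
      congr 1
      · refine Finset.sum_congr rfl fun ℓ hℓ => ?_
        have hℓn : ℓ + 1 ≤ n + 1 := by
          have := (Finset.mem_Icc.mp hℓ).2; omega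
        rw [Finset.prod_Icc_succ_top hℓn]
        ring
      · simp [Finset.Icc_eq_empty_of_lt (by omega : n + 1 < n + 1 + 1)]
    rw [hsum]
    have hfac : (0:ℝ) ≤ (1 + ε (n + 1)) * (Lc (n + 1)) ^ 2 :=
      mul_nonneg (by have := hε (n + 1); linarith) (sq_nonneg _)
    have step : ‖h (n + 1) - hhat (n + 1)‖ ^ 2 ≤
        ((1 + ε (n + 1)) * (Lc (n + 1)) ^ 2) * ‖h n - hhat n‖ ^ 2 +
        (1 + (ε (n + 1))⁻¹) * ‖a (n + 1) - ahat (n + 1)‖ ^ 2 := by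
      have hε1 : (0:ℝ) < 1 + ε (n + 1) := by have := hε (n + 1); linarith
      nlinarith [key, hlip, hε1]
    refine step.trans ?_
    have := mul_le_mul_of_nonneg_left ih hfac
    linarith
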